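/- Let a₁ > a₂ > 0 and b₁ > b₂ > 0, and define intervals I = (|（a₁+a₂)−(b₁+b₂)|, (a₁+a₂)+(b₁+b₂)) and I' = (|（a₁−a₂)−(b₁−b₂)|, (a₁−a₂)+(b₁−b₂)). Then the function p(γ₁,γ₂) = (1/8)·Δ_O(γ)/(Δ_O(a)Δ_O(b)) · (𝟙_I(γ₁+γ₂) − 𝟙_{−I}(γ₁+γ₂))·(𝟙_{I'}(γ₁−γ₂) − 𝟙_{−I'}(γ₁−γ₂)), where Δ_O(x) = x₁² − x₂², integrates to 1 over ℝ². -/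

import Mathlib

open MeasureTheory Set

/-- Real-valued indicator of a set of reals. -/
noncomputable def ind (s : Set ℝ) (x : ℝ) : ℝ := s.indicator 1 x

noncomputable def hdiff (A B : ℝ) : ℝ → ℝ := fun u =>
  u * ((Ioo |A - B| (A + B)).indicator 1 u - (Ioo (-(A + B)) (-|A - B|)).indicator 1 u)

lemma hdiff_eq (A B : ℝ) : hdiff A B =
    (Ioo |A - B| (A + B)).indicator id - (Ioo (-(A + B)) (-|A - B|)).indicator id := by
  funext u
  simp only [hdiff, Pi.sub_apply, Set.indicator_apply, Pi.one_apply, id]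
  split_ifs <;> ring

lemma integrableOn_id_Ioo (a b : ℝ) : IntegrableOn id (Ioo a b) := by
  apply (continuous_id.integrableOn_Icc (a := a) (b := b)).mono_set Ioo_subset_Icc_self

lemma hdiff_measurable (A B : ℝ) : Measurable (hdiff A B) := by
  rw [hdiff_eq]
  exact ((measurable_id.indicator measurableSet_Ioo).sub
    (measurable_id.indicator measurableSet_Ioo))

lemma hdiff_integral (A B : ℝ) (hAB : |A - B| ≤ A + B) :
    ∫ u, hdiff A B u = 4 * A * B := by
  have h2 : -(A + B) ≤ -|A - B| := by linarith
  rw [hdiff_eq]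
  rw [Pi.sub_def, integral_sub
    ((integrable_indicator_iff measurableSet_Ioo).2 (integrableOn_id_Ioo _ _))
    ((integrable_indicator_iff measurableSet_Ioo).2 (integrableOn_id_Ioo _ _))]
  rw [integral_indicator measurableSet_Ioo, integral_indicator measurableSet_Ioo]
  rw [← integral_Ioc_eq_integral_Ioo, ← integral_Ioc_eq_integral_Ioo,
    ← intervalIntegral.integral_of_le hAB, ← intervalIntegral.integral_of_le h2]
  simp only [id]
  rw [integral_id, integral_id]
  have : |A - B| ^ 2 = (A - B) ^ 2 := sq_abs _
  nlinarith [this]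

noncomputable def Lmap : (ℝ × ℝ) →ₗ[ℝ] (ℝ × ℝ) where
  toFun p := (p.1 + p.2, p.1 - p.2)
  map_add' p q := by simp [Prod.ext_iff]; constructor <;> ring
  map_smul' c p := by simp [Prod.ext_iff, smul_eq_mul]; constructor <;> ring

lemma Lmap_det : LinearMap.det Lmap = -2 := by
  rw [← LinearMap.det_toMatrix (Module.Basis.finTwoProd ℝ)]
  rw [Matrix.det_fin_two]
  simp [LinearMap.toMatrix_apply, Lmap, Module.Basis.finTwoProd]
  norm_num

lemma key_cov (f g : ℝ → ℝ) (hf : Measurable f) (hg : Measurable g) :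
    ∫ γ : ℝ × ℝ, f (γ.1 + γ.2) * g (γ.1 - γ.2) =
      (1 / 2) * ((∫ u, f u) * (∫ v, g v)) := by
  have hH : Measurable fun p : ℝ × ℝ => f p.1 * g p.2 :=
    (hf.comp measurable_fst).mul (hg.comp measurable_snd)
  have h1 : ∫ γ : ℝ × ℝ, f (γ.1 + γ.2) * g (γ.1 - γ.2) =
      ∫ p : ℝ × ℝ, (fun p : ℝ × ℝ => f p.1 * g p.2) (Lmap p) := rfl
  rw [h1, ← integral_map (Lmap.continuous_of_finiteDimensional.measurable.aemeasurable)
    hH.aestronglyMeasurable]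
  rw [Measure.map_linearMap_addHaar_eq_smul_addHaar _ (by rw [Lmap_det]; norm_num)]
  rw [integral_smul_measure, Lmap_det]
  norm_num
  rw [Measure.volume_eq_prod, integral_prod_mul]

/-- The `SO(4)` skew-symmetric Horn PDF integrates to `1` over `ℝ²`. Here
`I = (|(a₁+a₂)−(b₁+b₂)|, (a₁+a₂)+(b₁+b₂))`, `I' = (|(a₁−a₂)−(b₁−b₂)|, (a₁−a₂)+(b₁−b₂))`,
and `Δ_O(x) = x₁² − x₂²`. -/
theorem so4_skew_pdf_normalized (a₁ a₂ b₁ b₂ : ℝ) (ha : a₂ < a₁) (ha₂ : 0 < a₂)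
    (hb : b₂ < b₁) (hb₂ : 0 < b₂) :
    ∫ γ : ℝ × ℝ,
      (1 / 8) * ((γ.1 ^ 2 - γ.2 ^ 2) / ((a₁ ^ 2 - a₂ ^ 2) * (b₁ ^ 2 - b₂ ^ 2))) *
        ((ind (Ioo |(a₁ + a₂) - (b₁ + b₂)| ((a₁ + a₂) + (b₁ + b₂))) (γ.1 + γ.2) -
            ind (Ioo (-((a₁ + a₂) + (b₁ + b₂))) (-|(a₁ + a₂) - (b₁ + b₂)|)) (γ.1 + γ.2)) *
          (ind (Ioo |(a₁ - a₂) - (b₁ - b₂)| ((a₁ - a₂) + (b₁ - b₂))) (γ.1 - γ.2) -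
            ind (Ioo (-((a₁ - a₂) + (b₁ - b₂))) (-|(a₁ - a₂) - (b₁ - b₂)|)) (γ.1 - γ.2))) = 1 := by
  obtain ⟨D, hD⟩ : ∃ D : ℝ, (a₁ ^ 2 - a₂ ^ 2) * (b₁ ^ 2 - b₂ ^ 2) = D := ⟨_, rfl⟩
  rw [hD]
  have hD0 : 0 < D := by
    rw [← hD]; apply mul_pos <;> nlinarith
  have hstep : ∫ γ : ℝ × ℝ,
      (1 / 8) * ((γ.1 ^ 2 - γ.2 ^ 2) / D) *
        ((ind (Ioo |(a₁ + a₂) - (b₁ + b₂)| ((a₁ + a₂) + (b₁ + b₂))) (γ.1 + γ.2) -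
            ind (Ioo (-((a₁ + a₂) + (b₁ + b₂))) (-|(a₁ + a₂) - (b₁ + b₂)|)) (γ.1 + γ.2)) *
          (ind (Ioo |(a₁ - a₂) - (b₁ - b₂)| ((a₁ - a₂) + (b₁ - b₂))) (γ.1 - γ.2) -
            ind (Ioo (-((a₁ - a₂) + (b₁ - b₂))) (-|(a₁ - a₂) - (b₁ - b₂)|)) (γ.1 - γ.2))) =
      ∫ γ : ℝ × ℝ, (1 / (8 * D)) *
        (hdiff (a₁ + a₂) (b₁ + b₂) (γ.1 + γ.2) * hdiff (a₁ - a₂) (b₁ - b₂) (γ.1 - γ.2)) := by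
    congr 1
    funext γ
    simp only [hdiff, ind]
    ring
  rw [hstep, integral_const_mul,
    key_cov _ _ (hdiff_measurable _ _) (hdiff_measurable _ _),
    hdiff_integral _ _ (abs_sub_le_iff.mpr ⟨by linarith, by linarith⟩),
    hdiff_integral _ _ (abs_sub_le_iff.mpr ⟨by linarith, by linarith⟩)]
  have h16 : (1 : ℝ) / (8 * D) * (1 / 2 * (4 * (a₁ + a₂) * (b₁ + b₂) * (4 * (a₁ - a₂) * (b₁ - b₂)))) =
      (1 / (8 * D)) * (8 * D) := by
    rw [← hD]; ring
  rw [h16, one_div, inv_mul_cancel₀ (by positivity)]
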